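/- Let U be a bialgebra with counit ε and comultiplication Δ (Sweedler notation Δx = x₍₁₎ ⊗ x₍₂₎), and let C be a unital algebra which is a left U-module via ξ satisfying ξ_x(1) = ε(x)·1 and the Leibniz rule ξ_x(fg) = ξ_{x₍₁₎}(f)·ξ_{x₍₂₎}(g) (i.e., C is a U-module algebra). Suppose φ : U → C is a linear map with φ(1) = 1 and φ(xy) = (ξ_{x₍₁₎}·φ(y))·φ(x₍₂₎) for all x,y ∈ U. Then the prescription x · f := (ξ_{x₍₁₎}·f)·φ(x₍₂₎) defines a left U-module structure on C, i.e., 1 · f = f and x · (y · f) = (xy) · f for all x,y ∈ U and f ∈ C. -/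

import Mathlib

open TensorProduct

/-- The "Sweedler" map `x ↦ A(x₍₁₎) * B(x₍₂₎)`. -/
noncomputable def sw {R U C : Type*} [CommRing R] [Ring U] [Bialgebra R U]
    [Ring C] [Algebra R C] (A B : U →ₗ[R] C) : U →ₗ[R] C :=
  LinearMap.mul' R C ∘ₗ TensorProduct.map A B ∘ₗ Coalgebra.comul

/-- `actOn ξ f : x ↦ ξ_x · f`. -/
noncomputable def actOn {R U C : Type*} [CommRing R] [Ring U] [Algebra R U]
    [Ring C] [Algebra R C] (ξ : U →ₗ[R] Module.End R C) (f : C) : U →ₗ[R] C :=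
  LinearMap.applyₗ f ∘ₗ ξ

lemma actOn_apply {R U C : Type*} [CommRing R] [Ring U] [Algebra R U]
    [Ring C] [Algebra R C] (ξ : U →ₗ[R] Module.End R C) (f : C) (x : U) :
    actOn ξ f x = ξ x f := rfl

lemma sw_repr {R U C : Type*} [CommRing R] [Ring U] [Bialgebra R U]
    [Ring C] [Algebra R C] (A B : U →ₗ[R] C) {x : U} (r : Coalgebra.Repr R x (U × U)) :
    sw A B x = ∑ i ∈ r.index, A (r.left i) * B (r.right i) := by
  simp [sw, ← r.eq, map_sum]

/-- Coassociativity, in the form needed: apply the trilinear map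
`a ⊗ b ⊗ c ↦ ξ_a g * (ξ_b h * φ c)` to both sides of `coassoc`. -/
lemma tri_coassoc {R U C : Type*} [CommRing R] [Ring U] [Bialgebra R U]
    [Ring C] [Algebra R C] (ξ : U →ₗ[R] Module.End R C) (φ : U →ₗ[R] C)
    (g h : C) {x : U} (rx : Coalgebra.Repr R x (U × U))
    (r1 : ∀ i, Coalgebra.Repr R (rx.left i) (U × U)) (r2 : ∀ i, Coalgebra.Repr R (rx.right i) (U × U)) :
    ∑ i ∈ rx.index, ∑ k ∈ (r1 i).index,
        ξ ((r1 i).left k) g * (ξ ((r1 i).right k) h * φ (rx.right i))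
      = ∑ i ∈ rx.index, ∑ k ∈ (r2 i).index,
        ξ (rx.left i) g * (ξ ((r2 i).left k) h * φ ((r2 i).right k)) := by
  let Ψ : U ⊗[R] (U ⊗[R] U) →ₗ[R] C :=
    LinearMap.mul' R C ∘ₗ (LinearMap.mul' R C).lTensor C ∘ₗ
      TensorProduct.map (actOn ξ g) (TensorProduct.map (actOn ξ h) φ)
  have hΨ : ∀ a b c : U, Ψ (a ⊗ₜ (b ⊗ₜ c)) = ξ a g * (ξ b h * φ c) := by
    intro a b c; simp [Ψ, actOn_apply]
  have := congrArg Ψ (Coalgebra.sum_tmul_tmul_eq rx r1 r2)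
  simpa [map_sum, hΨ] using this

theorem prop1_module_structure {R U C : Type*} [CommRing R] [Ring U] [Bialgebra R U]
    [Ring C] [Algebra R C]
    (ξ : U →ₗ[R] Module.End R C)
    (hξone : ξ 1 = LinearMap.id)
    (hξmul : ∀ x y : U, ξ (x * y) = ξ x ∘ₗ ξ y)
    (hξunit : ∀ x : U, ξ x 1 = Coalgebra.counit (R := R) x • (1 : C))
    (hξleib : ∀ (x : U) (f g : C), ξ x (f * g) = sw (actOn ξ f) (actOn ξ g) x)
    (φ : U →ₗ[R] C) (hφone : φ 1 = 1)
    (hφ : ∀ x y : U, φ (x * y) = sw (actOn ξ (φ y)) φ x) :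
    (∀ f : C, sw (actOn ξ f) φ 1 = f) ∧
    (∀ (x y : U) (f : C),
      sw (actOn ξ (sw (actOn ξ f) φ y)) φ x = sw (actOn ξ f) φ (x * y)) := by
  constructor
  · intro f
    have h1 : Coalgebra.comul (R := R) (1 : U) = (1 : U) ⊗ₜ[R] (1 : U) := by
      rw [Bialgebra.comul_one]; rfl
    simp [sw, h1, actOn_apply, hξone, hφone]
  · intro x y f
    classical
    set rx := Coalgebra.Repr.arbitrary R x with hrx
    set ry := Coalgebra.Repr.arbitrary R y with hry
    set r1 : ∀ i, Coalgebra.Repr R (rx.left i) (U × U) := fun i => Coalgebra.Repr.arbitrary R _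
    set r2 : ∀ i, Coalgebra.Repr R (rx.right i) (U × U) := fun i => Coalgebra.Repr.arbitrary R _
    -- RHS
    have hRHS : sw (actOn ξ f) φ (x * y)
        = ∑ j ∈ ry.index, ∑ i ∈ rx.index, ∑ k ∈ (r2 i).index,
            ξ (rx.left i) (ξ (ry.left j) f)
              * (ξ ((r2 i).left k) (φ (ry.right j)) * φ ((r2 i).right k)) := by
      have hc : Coalgebra.comul (R := R) (x * y)
          = ∑ i ∈ rx.index, ∑ j ∈ ry.index,
              (rx.left i * ry.left j) ⊗ₜ[R] (rx.right i * ry.right j) := by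
        rw [Bialgebra.comul_mul, ← rx.eq, ← ry.eq, Finset.sum_mul_sum]
        simp [Algebra.TensorProduct.tmul_mul_tmul]
      calc sw (actOn ξ f) φ (x * y)
          = ∑ i ∈ rx.index, ∑ j ∈ ry.index,
              ξ (rx.left i * ry.left j) f * φ (rx.right i * ry.right j) := by
            simp [sw, hc, map_sum, actOn_apply]
        _ = ∑ j ∈ ry.index, ∑ i ∈ rx.index, ∑ k ∈ (r2 i).index,
              ξ (rx.left i) (ξ (ry.left j) f)
                * (ξ ((r2 i).left k) (φ (ry.right j)) * φ ((r2 i).right k)) := by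
            rw [Finset.sum_comm]
            refine Finset.sum_congr rfl fun j _ => Finset.sum_congr rfl fun i _ => ?_
            rw [hξmul, hφ, sw_repr _ _ (r2 i), Finset.mul_sum]
            simp [actOn_apply]
    -- LHS
    have hLHS : sw (actOn ξ (sw (actOn ξ f) φ y)) φ x
        = ∑ j ∈ ry.index, ∑ i ∈ rx.index, ∑ k ∈ (r1 i).index,
            ξ ((r1 i).left k) (ξ (ry.left j) f)
              * (ξ ((r1 i).right k) (φ (ry.right j)) * φ (rx.right i)) := by
      calc sw (actOn ξ (sw (actOn ξ f) φ y)) φ x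
          = ∑ i ∈ rx.index, ξ (rx.left i) (sw (actOn ξ f) φ y) * φ (rx.right i) := by
            rw [sw_repr _ _ rx]; simp [actOn_apply]
        _ = ∑ i ∈ rx.index, ∑ j ∈ ry.index, ∑ k ∈ (r1 i).index,
              ξ ((r1 i).left k) (ξ (ry.left j) f)
                * (ξ ((r1 i).right k) (φ (ry.right j)) * φ (rx.right i)) := by
            refine Finset.sum_congr rfl fun i _ => ?_
            rw [sw_repr _ _ ry, map_sum, Finset.sum_mul]
            refine Finset.sum_congr rfl fun j _ => ?_
            rw [hξleib, sw_repr _ _ (r1 i), Finset.sum_mul]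
            simp [actOn_apply, mul_assoc]
        _ = _ := Finset.sum_comm
    rw [hLHS, hRHS]
    exact Finset.sum_congr rfl fun j _ => tri_coassoc ξ φ (ξ (ry.left j) f) (φ (ry.right j)) rx r1 r2
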